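/- For every positive natural number L, define Y(L) = Σ_j (-1)^j q^(2j²+j) [2L choose L-2j-1]_q. Then Y(L) = (1-q^L) ∏_{k=1}^{L-1} (1+q^(2k)). -/

import Mathlib

open LaurentPolynomial Finset

noncomputable section

/-- Gaussian binomial coefficient with natural indices, in base `x`, defined by the
`q`-Pascal recurrence `[n+1, k+1] = [n, k] + x^(k+1) * [n, k+1]`.  It vanishes for `k > n`. -/
def gaussAux (x : LaurentPolynomial ℤ) : ℕ → ℕ → LaurentPolynomial ℤ
  | _, 0 => 1
  | 0, _ + 1 => 0
  | n + 1, k + 1 => gaussAux x n k + x ^ (k + 1) * gaussAux x n (k + 1)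

/-- The Gaussian binomial coefficient `[n choose k]` in base `x`, for integer indices:
it is zero when `n < 0` or `k < 0` (and, by `gaussAux`, also when `k > n`). -/
def qbin (x : LaurentPolynomial ℤ) (n k : ℤ) : LaurentPolynomial ℤ :=
  if 0 ≤ n ∧ 0 ≤ k then gaussAux x n.toNat k.toNat else 0

/-- `(-1)^j` for an integer `j`, as a Laurent polynomial. -/
def m1 (j : ℤ) : LaurentPolynomial ℤ := ((((-1 : ℤˣ) ^ j : ℤˣ) : ℤ) : LaurentPolynomial ℤ)

lemma gaussAux_eq_zero (x : LaurentPolynomial ℤ) : ∀ n k : ℕ, n < k → gaussAux x n k = 0 := by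
  intro n
  induction n with
  | zero => intro k hk; match k, hk with
    | k + 1, _ => rfl
  | succ n ih =>
    intro k hk
    match k, hk with
    | k + 1, hk =>
      show gaussAux x n k + x ^ (k+1) * gaussAux x n (k+1) = 0
      rw [ih k (by omega), ih (k+1) (by omega), mul_zero, add_zero]

lemma qbin_neg (x : LaurentPolynomial ℤ) (n k : ℤ) (h : k < 0) : qbin x n k = 0 := by
  rw [qbin, if_neg]; omega

lemma qbin_gt (x : LaurentPolynomial ℤ) (n k : ℤ) (h : n < k) : qbin x n k = 0 := by
  rw [qbin]
  split
  · next h2 => exact gaussAux_eq_zero x _ _ (by omega)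
  · rfl

lemma qbin_bounds {x : LaurentPolynomial ℤ} {n k : ℤ} (h : qbin x n k ≠ 0) :
    0 ≤ k ∧ k ≤ n := by
  constructor
  · by_contra hk; exact h (qbin_neg x n k (by omega))
  · by_contra hk; exact h (qbin_gt x n k (by omega))

lemma qbin_zero_self (x : LaurentPolynomial ℤ) (n : ℤ) (hn : 0 ≤ n) : qbin x n 0 = 1 := by
  rw [qbin, if_pos ⟨hn, le_refl 0⟩]
  have : n.toNat = n.toNat := rfl
  rcases Int.toNat n with _ | m <;> rfl

-- Pascal 1: [n+1, k] = [n, k-1] + T k * [n, k]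
lemma qbin_p1 (n : ℕ) (k : ℤ) :
    qbin (T 1) ((n : ℤ) + 1) k = qbin (T 1) n (k - 1) + T k * qbin (T 1) n k := by
  rcases lt_trichotomy k 0 with hk | hk | hk
  · rw [qbin_neg _ _ _ hk, qbin_neg _ _ _ (by omega), qbin_neg _ _ _ hk, mul_zero, add_zero]
  · subst hk
    rw [qbin_zero_self _ _ (by omega), qbin_neg _ _ _ (by omega), qbin_zero_self _ _ (by omega),
      T_zero, zero_add, one_mul]
  · obtain ⟨m, rfl⟩ : ∃ m : ℕ, k = (m : ℤ) + 1 := ⟨(k - 1).toNat, by omega⟩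
    rw [qbin, qbin, qbin, if_pos ⟨by positivity, by positivity⟩,
      if_pos ⟨Int.natCast_nonneg n, by omega⟩, if_pos ⟨Int.natCast_nonneg n, by positivity⟩]
    have h1 : ((n : ℤ) + 1).toNat = n + 1 := by omega
    have h2 : ((m : ℤ) + 1).toNat = m + 1 := by omega
    have h3 : ((m : ℤ) + 1 - 1).toNat = m := by omega
    have h4 : ((n : ℤ)).toNat = n := by omega
    rw [h1, h2, h3, h4]
    show gaussAux (T 1) n m + (T 1) ^ (m + 1) * gaussAux (T 1) n (m + 1) = _
    rw [T_pow, mul_one]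
    norm_cast

-- Pascal 2: [n+1, k] = T (n+1-k) * [n, k-1] + [n, k]
lemma qbin_p2 (n : ℕ) : ∀ k : ℤ,
    qbin (T 1) ((n : ℤ) + 1) k = T ((n : ℤ) + 1 - k) * qbin (T 1) n (k - 1) + qbin (T 1) n k := by
  induction n with
  | zero =>
    intro k
    push_cast
    rcases lt_trichotomy k 0 with hk | hk | hk
    · rw [qbin_neg _ _ _ hk, qbin_neg _ _ _ (by omega), qbin_neg _ _ _ hk, mul_zero, add_zero]
    · subst hk
      rw [qbin_zero_self _ _ (by omega), qbin_neg _ _ _ (by omega),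
        qbin_zero_self _ _ (by omega), mul_zero, zero_add]
    · rcases eq_or_lt_of_le (show (0:ℤ)+1 ≤ k by omega) with hk1 | hk1
      · rw [← hk1]
        norm_num
        have e1 : qbin (T 1) (1 : ℤ) 1 = 1 := by
          rw [qbin, if_pos ⟨by norm_num, by norm_num⟩]
          show gaussAux (T 1) 1 1 = 1
          show gaussAux (T 1) 0 0 + (T 1) ^ 1 * gaussAux (T 1) 0 1 = 1
          show gaussAux (T 1) 0 0 + (T 1) ^ 1 * 0 = 1
          rw [mul_zero, add_zero]; rfl
        rw [e1, qbin_zero_self _ _ (by omega), qbin_gt (T 1) 0 1 (by norm_num)]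
        norm_num [T_zero]
      · rw [qbin_gt _ _ _ (by omega), qbin_gt _ _ _ (by omega),
          qbin_gt _ _ _ (by omega), mul_zero, add_zero]
  | succ n ih =>
    intro k
    push_cast
    have key : qbin (T 1) ((n : ℤ) + 1 + 1) k
        = (T ((n:ℤ) + 1 - (k-1)) * qbin (T 1) n (k - 1 - 1) + qbin (T 1) n (k - 1))
          + T k * (T ((n:ℤ) + 1 - k) * qbin (T 1) n (k - 1) + qbin (T 1) n k) := by
      rw [show ((n:ℤ) + 1 + 1) = ((n + 1 : ℕ) : ℤ) + 1 by push_cast; ring,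
        qbin_p1 (n + 1) k]
      rw [show ((n + 1 : ℕ) : ℤ) = (n : ℤ) + 1 by push_cast; ring, ih (k - 1), ih k]
    rw [key]
    have r1 : qbin (T 1) ((n:ℤ) + 1) (k - 1)
        = qbin (T 1) n (k - 1 - 1) + T (k - 1) * qbin (T 1) n (k - 1) := qbin_p1 n (k - 1)
    have r2 : qbin (T 1) ((n:ℤ) + 1) k
        = qbin (T 1) n (k - 1) + T k * qbin (T 1) n k := qbin_p1 n k
    rw [r1, r2]
    have tt : ∀ a b : ℤ, (T a : LaurentPolynomial ℤ) * T b = T (a + b) := fun a b => (T_add a b).symm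
    have k1 : T k * (T ((n:ℤ)+1-k) * qbin (T 1) n (k-1)) = T ((n:ℤ)+1) * qbin (T 1) n (k-1) := by
      rw [← mul_assoc, tt, show k + ((n:ℤ)+1-k) = (n:ℤ)+1 by ring]
    have k2 : (T ((n:ℤ) + 1 + 1 - k) : LaurentPolynomial ℤ) * T (k-1) = T ((n:ℤ)+1) := by
      rw [tt, show (n:ℤ) + 1 + 1 - k + (k-1) = (n:ℤ)+1 by ring]
    have k3 : (T ((n:ℤ) + 1 - (k - 1)) : LaurentPolynomial ℤ) = T ((n:ℤ) + 1 + 1 - k) := by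
      rw [show (n:ℤ) + 1 - (k-1) = (n:ℤ) + 1 + 1 - k by ring]
    rw [k3, mul_add (T k), k1, mul_add (T ((n:ℤ)+1+1-k)), ← mul_assoc, k2]
    ring

-- Symmetry
lemma qbin_symm (n : ℕ) : ∀ k : ℤ, qbin (T 1) n k = qbin (T 1) n ((n : ℤ) - k) := by
  induction n with
  | zero =>
    intro k
    push_cast
    rcases lt_trichotomy k 0 with hk | hk | hk
    · rw [qbin_neg _ _ _ hk, qbin_gt _ _ _ (by omega)]
    · subst hk; norm_num
    · rw [qbin_gt _ _ _ (by omega), qbin_neg _ _ _ (by omega)]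
  | succ n ih =>
    intro k
    push_cast
    rw [show ((n:ℤ) + 1) = ((n:ℕ):ℤ) + 1 from rfl]
    rw [qbin_p1 n k, qbin_p2 n ((n : ℤ) + 1 - k)]
    rw [ih (k - 1), ih k]
    rw [show ((n:ℤ) + 1 - k - 1) = (n:ℤ) - k by ring,
      show ((n:ℤ) + 1 - ((n:ℤ) + 1 - k)) = k by ring,
      show ((n:ℤ) - (k - 1)) = (n:ℤ) + 1 - k - 1 + 1 by ring]
    rw [show ((n:ℤ) + 1 - k - 1 + 1) = (n:ℤ) - k + 1 by ring]
    rw [show (n:ℤ) - k + 1 = (n:ℤ)+1-k by ring]; ring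

open Function

lemma Tmul (a b : ℤ) : (T a : LaurentPolynomial ℤ) * T b = T (a + b) := (T_add a b).symm

lemma TTlem (u v : LaurentPolynomial ℤ) (A B C D : ℤ) (h : A + B = C + D) :
    u * T A * (T B * v) = T C * (u * T D * v) := by
  have e1 : (T A : LaurentPolynomial ℤ) * T B = T C * T D := by rw [Tmul, Tmul, h]
  calc u * T A * (T B * v) = (T A * T B) * (u * v) := by ring
    _ = (T C * T D) * (u * v) := by rw [e1]
    _ = T C * (u * T D * v) := by ring

lemma m1_zero : m1 0 = 1 := by simp [m1]

lemma m1_sub_one (j : ℤ) : m1 (j - 1) = -m1 j := by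
  unfold m1
  rw [show j - 1 = j + (-1) by ring, zpow_add, zpow_neg_one, Int.units_inv_eq_self]
  push_cast
  ring

lemma m1_neg (j : ℤ) : m1 (-j) = m1 j := by
  unfold m1
  rw [zpow_neg, Int.units_inv_eq_self]

lemma supp_fin (n : ℕ) (c : ℤ) (g : ℤ → LaurentPolynomial ℤ) :
    (Function.support fun j => g j * qbin (T 1) (n : ℤ) (c - 2*j)).Finite := by
  apply Set.Finite.subset (Set.finite_Icc (-(n + c.natAbs : ℤ)) (n + c.natAbs))
  intro j hj
  have hq : qbin (T 1) (n : ℤ) (c - 2*j) ≠ 0 := by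
    intro h
    apply hj
    show g j * qbin (T 1) (n : ℤ) (c - 2*j) = 0
    rw [h, mul_zero]
  obtain ⟨h1, h2⟩ := qbin_bounds hq
  simp only [Set.mem_Icc]
  omega

def SE (n : ℕ) (a c : ℤ) : LaurentPolynomial ℤ :=
  ∑ᶠ j : ℤ, m1 j * T (2*j^2 + a*j) * qbin (T 1) (n : ℤ) (c - 2*j)

lemma SE_p1 (n : ℕ) (a c : ℤ) : SE (n+1) a c = SE n a (c-1) + T c * SE n (a-2) c := by
  rw [SE, SE, SE, mul_finsum _ _, ← finsum_add_distrib (supp_fin n (c-1) _)]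
  · apply finsum_congr
    intro j
    rw [show ((n+1 : ℕ) : ℤ) = (n : ℤ) + 1 by push_cast; ring, qbin_p1 n (c - 2*j),
      show c - 2*j - 1 = (c-1) - 2*j by ring, mul_add]
    congr 1
    exact TTlem _ _ _ _ _ _ (by ring)
  · -- support of T c * stuff
    have := supp_fin n c (fun j => T c * (m1 j * T (2*j^2 + (a-2)*j)))
    apply Set.Finite.subset this
    intro j hj
    show T c * (m1 j * T (2*j^2 + (a-2)*j)) * qbin (T 1) (n:ℤ) (c - 2*j) ≠ 0
    intro h
    apply hj
    show T c * (m1 j * T (2*j^2 + (a-2)*j) * qbin (T 1) (n:ℤ) (c - 2*j)) = 0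
    rw [← mul_assoc, h]

lemma SE_p2 (n : ℕ) (a c : ℤ) :
    SE (n+1) a c = T ((n:ℤ) + 1 - c) * SE n (a+2) (c-1) + SE n a c := by
  rw [SE, SE, SE, mul_finsum _ _,
    ← finsum_add_distrib _ (supp_fin n c _)]
  · apply finsum_congr
    intro j
    rw [show ((n+1 : ℕ) : ℤ) = (n : ℤ) + 1 by push_cast; ring, qbin_p2 n (c - 2*j),
      show c - 2*j - 1 = (c-1) - 2*j by ring, mul_add]
    congr 1
    exact TTlem _ _ _ _ _ _ (by ring)
  · have := supp_fin n (c-1) (fun j => T ((n:ℤ)+1-c) * (m1 j * T (2*j^2 + (a+2)*j)))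
    apply Set.Finite.subset this
    intro j hj
    show T ((n:ℤ)+1-c) * (m1 j * T (2*j^2 + (a+2)*j)) * qbin (T 1) (n:ℤ) ((c-1) - 2*j) ≠ 0
    intro h
    apply hj
    show T ((n:ℤ)+1-c) * (m1 j * T (2*j^2 + (a+2)*j) * qbin (T 1) (n:ℤ) ((c-1) - 2*j)) = 0
    rw [← mul_assoc, h]

lemma SE_shift (n : ℕ) (a c : ℤ) : SE n a (c-2) = -(T (2-a) * SE n (a-4) c) := by
  rw [SE, SE, neg_mul_eq_neg_mul, mul_finsum _ _]
  rw [← finsum_comp_equiv (Equiv.subRight (1 : ℤ))]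
  apply finsum_congr
  intro j
  show m1 (j - 1) * T (2*(j-1)^2 + a*(j-1)) * qbin (T 1) (n:ℤ) ((c-2) - 2*(j-1))
      = -T (2-a) * (m1 j * T (2*j^2 + (a-4)*j) * qbin (T 1) (n:ℤ) (c - 2*j))
  rw [m1_sub_one, show (c-2) - 2*(j-1) = c - 2*j by ring,
    show 2*(j-1)^2 + a*(j-1) = (2-a) + (2*j^2 + (a-4)*j) by ring, ← Tmul]
  ring

lemma SE_refl (n : ℕ) (a c : ℤ) : SE n a c = SE n (-a) ((n:ℤ) - c) := by
  rw [SE, SE, ← finsum_comp_equiv (Equiv.neg ℤ)]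
  apply finsum_congr
  intro j
  show m1 (-j) * T (2*(-j)^2 + a*(-j)) * qbin (T 1) (n:ℤ) (c - 2*(-j))
      = m1 j * T (2*j^2 + (-a)*j) * qbin (T 1) (n:ℤ) (((n:ℤ) - c) - 2*j)
  rw [m1_neg, qbin_symm n (c - 2*(-j)), show 2*(-j)^2 + a*(-j) = 2*j^2 + (-a)*j by ring,
    show (n:ℤ) - (c - 2*(-j)) = ((n:ℤ) - c) - 2*j by ring]

lemma SE_zero_zero (a : ℤ) : SE 0 a 0 = 1 := by
  rw [SE, finsum_eq_single _ 0]
  · rw [m1_zero, show 2*(0:ℤ)^2 + a*0 = 0 by ring, T_zero,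
      show (0:ℤ) - 2*0 = 0 by ring, qbin_zero_self (T 1) ((0:ℕ):ℤ) (by norm_num)]
    ring
  · intro j hj
    rcases lt_trichotomy j 0 with h | h | h
    · rw [qbin_gt _ _ _ (by push_cast; omega), mul_zero]
    · exact absurd h hj
    · rw [qbin_neg _ _ _ (by omega), mul_zero]

lemma SE_zero_negone (a : ℤ) : SE 0 a (-1) = 0 := by
  rw [SE]
  apply finsum_eq_zero_of_forall_eq_zero
  intro j
  rcases le_or_gt 0 j with h | h
  · rw [qbin_neg _ _ _ (by omega), mul_zero]
  · rw [qbin_gt _ _ _ (by push_cast; omega), mul_zero]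

lemma R1lem (L : ℕ) : SE (2*L) 5 ((L:ℤ)-2) = -(T (-3) * SE (2*L) 1 (L:ℤ)) := by
  have h := SE_shift (2*L) 5 (L:ℤ)
  rw [show (2:ℤ)-5 = -3 by norm_num, show (5:ℤ)-4 = 1 by norm_num] at h
  exact h

lemma R2lem (L : ℕ) : SE (2*L) (-3) ((L:ℤ)+1) = -(T (-1) * SE (2*L) 1 ((L:ℤ)-1)) := by
  have h := SE_shift (2*L) 1 ((L:ℤ)+1)
  rw [show (L:ℤ)+1-2 = (L:ℤ)-1 by ring, show (2:ℤ)-1 = 1 by norm_num,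
    show (1:ℤ)-4 = -3 by norm_num] at h
  rw [h, mul_neg, neg_neg, ← mul_assoc, Tmul, show (-1:ℤ)+1 = 0 by norm_num, T_zero, one_mul]

lemma R4lem (L : ℕ) : SE (2*L) 3 ((L:ℤ)-1) = -(T (-1) * SE (2*L) 1 ((L:ℤ)-1)) := by
  have h := SE_refl (2*L) 3 ((L:ℤ)-1)
  rw [show -(3:ℤ) = -3 by norm_num,
    show ((2*L:ℕ):ℤ) - ((L:ℤ)-1) = (L:ℤ)+1 by push_cast; ring] at h
  rw [h]
  exact R2lem L

lemma R3lem (L : ℕ) : SE (2*L) (-1) (L:ℤ) = SE (2*L) 1 (L:ℤ) := by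
  have h := SE_refl (2*L) (-1) (L:ℤ)
  rw [show -(-1:ℤ) = 1 by norm_num, show ((2*L:ℕ):ℤ) - (L:ℤ) = (L:ℤ) by push_cast; ring] at h
  exact h

lemma keyY (L : ℕ) : SE (2*L+2) 1 (L:ℤ) =
    (1 - T (2*(L:ℤ)+1)) * SE (2*L) 1 (L:ℤ)
      - (T (L:ℤ) + T ((L:ℤ)+1)) * SE (2*L) 1 ((L:ℤ)-1) := by
  set B := SE (2*L) 1 (L:ℤ) with hB
  set Y := SE (2*L) 1 ((L:ℤ)-1) with hY
  have E1 : SE (2*L+1+1) 1 (L:ℤ)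
      = T ((L:ℤ)+2) * SE (2*L+1) 3 ((L:ℤ)-1) + SE (2*L+1) 1 (L:ℤ) := by
    have h := SE_p2 (2*L+1) 1 (L:ℤ)
    rw [show ((2*L+1:ℕ):ℤ) + 1 - (L:ℤ) = (L:ℤ)+2 by push_cast; ring,
      show (1:ℤ)+2 = 3 by norm_num] at h
    exact h
  have E2 : SE (2*L+1) 3 ((L:ℤ)-1)
      = T ((L:ℤ)+2) * (-(T (-3) * B)) + (-(T (-1) * Y)) := by
    have h := SE_p2 (2*L) 3 ((L:ℤ)-1)
    rw [show ((2*L:ℕ):ℤ) + 1 - ((L:ℤ)-1) = (L:ℤ)+2 by push_cast; ring,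
      show (3:ℤ)+2 = 5 by norm_num, show (L:ℤ)-1-1 = (L:ℤ)-2 by ring] at h
    rw [h, R1lem L, R4lem L]
  have E3 : SE (2*L+1) 1 (L:ℤ) = T ((L:ℤ)+1) * (-(T (-1) * Y)) + B := by
    have h := SE_p2 (2*L) 1 (L:ℤ)
    rw [show ((2*L:ℕ):ℤ) + 1 - (L:ℤ) = (L:ℤ)+1 by push_cast; ring,
      show (1:ℤ)+2 = 3 by norm_num] at h
    rw [h, R4lem L]
  rw [show 2*L+2 = 2*L+1+1 from rfl, E1, E2, E3]
  have h1 : (T ((L:ℤ)+2) : LaurentPolynomial ℤ) * (T ((L:ℤ)+2) * T (-3)) = T (2*(L:ℤ)+1) := by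
    rw [Tmul, Tmul, show (L:ℤ)+2+((L:ℤ)+2+ -3) = 2*(L:ℤ)+1 by ring]
  have h2 : (T ((L:ℤ)+2) : LaurentPolynomial ℤ) * T (-1) = T ((L:ℤ)+1) := by
    rw [Tmul, show (L:ℤ)+2+ -1 = (L:ℤ)+1 by ring]
  have h3 : (T ((L:ℤ)+1) : LaurentPolynomial ℤ) * T (-1) = T (L:ℤ) := by
    rw [Tmul, show (L:ℤ)+1+ -1 = (L:ℤ) by ring]
  linear_combination (-B) * h1 + (-Y) * h2 + (-Y) * h3

lemma keyB (L : ℕ) : SE (2*L+2) 1 ((L:ℤ)+1) =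
    (1 - T (2*(L:ℤ)+1)) * SE (2*L) 1 ((L:ℤ)-1)
      + (T (L:ℤ) + T ((L:ℤ)+1)) * SE (2*L) 1 (L:ℤ) := by
  set B := SE (2*L) 1 (L:ℤ) with hB
  set Y := SE (2*L) 1 ((L:ℤ)-1) with hY
  have F1 : SE (2*L+1+1) 1 ((L:ℤ)+1)
      = SE (2*L+1) 1 (L:ℤ) + T ((L:ℤ)+1) * SE (2*L+1) (-1) ((L:ℤ)+1) := by
    have h := SE_p1 (2*L+1) 1 ((L:ℤ)+1)
    rw [show (L:ℤ)+1-1 = (L:ℤ) by ring, show (1:ℤ)-2 = -1 by norm_num] at h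
    exact h
  have F2 : SE (2*L+1) 1 (L:ℤ) = Y + T (L:ℤ) * B := by
    have h := SE_p1 (2*L) 1 (L:ℤ)
    rw [show (1:ℤ)-2 = -1 by norm_num, R3lem L] at h
    exact h
  have F3 : SE (2*L+1) (-1) ((L:ℤ)+1) = B + T ((L:ℤ)+1) * (-(T (-1) * Y)) := by
    have h := SE_p1 (2*L) (-1) ((L:ℤ)+1)
    rw [show (L:ℤ)+1-1 = (L:ℤ) by ring, show (-1:ℤ)-2 = -3 by norm_num, R3lem L, R2lem L] at h
    exact h
  rw [show 2*L+2 = 2*L+1+1 from rfl, F1, F2, F3]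
  have h1 : (T ((L:ℤ)+1) : LaurentPolynomial ℤ) * (T ((L:ℤ)+1) * T (-1)) = T (2*(L:ℤ)+1) := by
    rw [Tmul, Tmul, show (L:ℤ)+1+((L:ℤ)+1+ -1) = 2*(L:ℤ)+1 by ring]
  linear_combination (-Y) * h1

lemma main_pair (L : ℕ) (hL : 1 ≤ L) :
    SE (2*L) 1 ((L:ℤ)-1) = (1 - T (L:ℤ)) * ∏ k ∈ Finset.Icc 1 (L-1), (1 + T (2*(k:ℤ)))
    ∧ SE (2*L) 1 (L:ℤ) = (1 + T (L:ℤ)) * ∏ k ∈ Finset.Icc 1 (L-1), (1 + T (2*(k:ℤ))) := by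
  induction L, hL using Nat.le_induction with
  | base =>
    have e0 : Finset.Icc 1 (1-1) = (∅ : Finset ℕ) := by decide
    rw [e0, Finset.prod_empty]
    have hY := keyY 0
    have hB := keyB 0
    norm_num at hY hB ⊢
    rw [SE_zero_zero, SE_zero_negone] at hY hB
    constructor
    · rw [hY]; ring
    · rw [hB]; ring
  | succ L hL ih =>
    obtain ⟨ihY, ihB⟩ := ih
    have hprod : (∏ k ∈ Finset.Icc 1 L, (1 + T (2*(k:ℤ))) : LaurentPolynomial ℤ)
        = (∏ k ∈ Finset.Icc 1 (L-1), (1 + T (2*(k:ℤ)))) * (1 + T (2*(L:ℤ))) := by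
      conv_lhs => rw [show L = L-1+1 by omega]
      rw [Finset.prod_Icc_succ_top (by omega)]
      rw [show L-1+1 = L by omega]
    set P : LaurentPolynomial ℤ := ∏ k ∈ Finset.Icc 1 (L-1), (1 + T (2*(k:ℤ))) with hP
    have h1 : (T (L:ℤ) : LaurentPolynomial ℤ) * T (L:ℤ) = T (2*(L:ℤ)) := by
      rw [Tmul, show (L:ℤ) + (L:ℤ) = 2*(L:ℤ) by ring]
    have h2 : (T (L:ℤ) : LaurentPolynomial ℤ) * T ((L:ℤ)+1) = T (2*(L:ℤ)+1) := by
      rw [Tmul, show (L:ℤ) + ((L:ℤ)+1) = 2*(L:ℤ)+1 by ring]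
    have h3 : (T (2*(L:ℤ)+1) : LaurentPolynomial ℤ) * T (L:ℤ)
        = T ((L:ℤ)+1) * T (2*(L:ℤ)) := by
      rw [Tmul, Tmul, show 2*(L:ℤ)+1 + (L:ℤ) = (L:ℤ)+1 + 2*(L:ℤ) by ring]
    have c1 : ((L+1:ℕ):ℤ) - 1 = (L:ℤ) := by push_cast; ring
    have c2 : ((L+1:ℕ):ℤ) = (L:ℤ) + 1 := by push_cast; ring
    have c3 : 2*(L+1) = 2*L+2 := by omega
    have c4 : (L+1)-1 = L := by omega
    constructor
    · rw [c3, c1, c2, c4, keyY L, ihY, ihB, hprod]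
      linear_combination P * h1 + P * h2 - P * h3
    · rw [c3, c2, c4, keyB L, ihY, ihB, hprod]
      linear_combination P * h1 + P * h2 + P * h3

theorem stmt7 (L : ℕ) (hL : 0 < L) :
    (∑ᶠ j : ℤ, m1 j * T (2 * j ^ 2 + j) * qbin (T 1) (2 * L) (L - 2 * j - 1)) =
      (1 - T L) * ∏ k ∈ Finset.Icc 1 (L - 1), (1 + T (2 * (k : ℤ))) := by
  have e : (∑ᶠ j : ℤ, m1 j * T (2 * j ^ 2 + j) * qbin (T 1) (2 * L) (L - 2 * j - 1))
      = SE (2*L) 1 ((L:ℤ)-1) := by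
    rw [SE]
    apply finsum_congr
    intro j
    rw [show (2 * j ^ 2 + j : ℤ) = 2*j^2 + 1*j by ring,
      show ((L:ℤ) - 2 * j - 1) = ((L:ℤ)-1) - 2*j by ring,
      show (2 * (L:ℤ)) = ((2*L:ℕ):ℤ) by push_cast; ring]
  rw [e, (main_pair L hL).1]
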